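/- Let M be an n×n Hermitian complex matrix, let P be any n×n complex matrix, and set X = P M P†. Then i_+(M) ≥ i_+(X) and i_-(M) ≥ i_-(X); that is, the numbers of positive and of negative eigenvalues do not increase under the transformation M ↦ P M P†. -/

import Mathlib

open Matrix Kronecker
open scoped ComplexOrder

/-- Partial transpose on the first factor of an `m × n` bipartite system:
`(ptrans M) ((i,k),(j,l)) = M ((j,k),(i,l))`. -/
def ptrans {m n : ℕ} (M : Matrix (Fin m × Fin n) (Fin m × Fin n) ℂ) :
    Matrix (Fin m × Fin n) (Fin m × Fin n) ℂ :=
  Matrix.of fun p q => M (q.1, p.2) (p.1, q.2)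

/-- Number of negative eigenvalues (with multiplicity) of a Hermitian matrix. -/
noncomputable def iNeg {ι : Type} [Fintype ι] [DecidableEq ι] {M : Matrix ι ι ℂ}
    (hM : M.IsHermitian) : ℕ :=
  (Finset.univ.filter fun i => hM.eigenvalues i < 0).card

/-- Number of zero eigenvalues (with multiplicity) of a Hermitian matrix. -/
noncomputable def iZero {ι : Type} [Fintype ι] [DecidableEq ι] {M : Matrix ι ι ℂ}
    (hM : M.IsHermitian) : ℕ :=
  (Finset.univ.filter fun i => hM.eigenvalues i = 0).card

/-- Number of positive eigenvalues (with multiplicity) of a Hermitian matrix. -/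
noncomputable def iPos {ι : Type} [Fintype ι] [DecidableEq ι] {M : Matrix ι ι ℂ}
    (hM : M.IsHermitian) : ℕ :=
  (Finset.univ.filter fun i => 0 < hM.eigenvalues i).card

/-- The numbers of positive and negative eigenvalues do not increase under
`M ↦ P M P†`. -/
lemma quad_diag {n : ℕ} (f : Fin n → ℝ) (x : Fin n → ℂ) :
    star x ⬝ᵥ (diagonal ((↑) ∘ f : Fin n → ℂ) *ᵥ x)
      = (↑(∑ j, f j * Complex.normSq (x j)) : ℂ) := by
  simp only [dotProduct, mulVec_diagonal, Function.comp_apply, Pi.star_apply,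
    Complex.ofReal_sum, Complex.ofReal_mul]
  refine Finset.sum_congr rfl fun j _ => ?_
  rw [Complex.star_def, show (starRingEnd ℂ) (x j) * (↑(f j) * x j)
      = ↑(f j) * ((starRingEnd ℂ) (x j) * x j) by ring, ← Complex.normSq_eq_conj_mul_self]

lemma core {n : ℕ} (d e : Fin n → ℝ) (Q : Matrix (Fin n) (Fin n) ℂ)
    (h : diagonal ((↑) ∘ e : Fin n → ℂ) = Qᴴ * diagonal ((↑) ∘ d : Fin n → ℂ) * Q) :
    (Finset.univ.filter fun i => 0 < e i).card ≤
    (Finset.univ.filter fun i => 0 < d i).card := by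
  classical
  set S := Finset.univ.filter fun i => 0 < e i with hS
  set T := Finset.univ.filter fun i => 0 < d i with hT
  set v : ↥S → (↥T → ℂ) := fun i t => Q t i with hv
  have hli : LinearIndependent ℂ v := by
    rw [Fintype.linearIndependent_iff]
    intro c hc i₀
    set c' : Fin n → ℂ := fun j => if h : j ∈ S then c ⟨j, h⟩ else 0 with hc'
    by_contra hne
    have hQc : ∀ t : Fin n, t ∈ T → (Q *ᵥ c') t = 0 := by
      intro t ht
      have h1 := congrFun hc ⟨t, ht⟩
      simp only [Finset.sum_apply, Pi.smul_apply, smul_eq_mul, Pi.zero_apply, hv] at h1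
      have h2 : ∑ j, Q t j * c' j = ∑ j ∈ S, Q t j * c' j :=
        (Finset.sum_subset (Finset.subset_univ S) (fun j _ hj => by simp [hc', hj])).symm
      have h3 : ∑ j ∈ S, Q t j * c' j = ∑ i : ↥S, Q t i * c' i :=
        (Finset.sum_coe_sort S _).symm
      rw [mulVec, dotProduct, h2, h3]
      rw [← h1]
      refine Finset.sum_congr rfl fun i _ => ?_
      simp [hc', i.2, mul_comm]
    -- quadratic form identity
    have hquad : (∑ j, e j * Complex.normSq (c' j))
        = ∑ j, d j * Complex.normSq ((Q *ᵥ c') j) := by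
      have := quad_diag e c'
      rw [h] at this
      rw [show (Qᴴ * diagonal ((↑) ∘ d : Fin n → ℂ) * Q) *ᵥ c'
            = Qᴴ *ᵥ (diagonal ((↑) ∘ d : Fin n → ℂ) *ᵥ (Q *ᵥ c')) by
          simp [mulVec_mulVec, Matrix.mul_assoc]] at this
      rw [dotProduct_mulVec, ← star_mulVec] at this
      rw [quad_diag d (Q *ᵥ c')] at this
      exact_mod_cast this.symm
    have hpos : 0 < ∑ j, e j * Complex.normSq (c' j) := by
      refine Finset.sum_pos' (fun j _ => ?_) ⟨(i₀ : Fin n), Finset.mem_univ _, ?_⟩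
      · by_cases hj : j ∈ S
        · exact mul_nonneg (le_of_lt (Finset.mem_filter.mp hj).2) (Complex.normSq_nonneg _)
        · simp [hc', hj]
      · have he : 0 < e i₀ := (Finset.mem_filter.mp i₀.2).2
        have : c' (i₀ : Fin n) = c i₀ := by simp [hc', i₀.2]
        rw [this]
        exact mul_pos he (by simpa [Complex.normSq_pos] using hne)
    have hnonpos : ∑ j, d j * Complex.normSq ((Q *ᵥ c') j) ≤ 0 := by
      refine Finset.sum_nonpos fun j _ => ?_
      by_cases hj : j ∈ T
      · simp [hQc j hj]
      · have : d j ≤ 0 := by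
          by_contra hd
          exact hj (by simp [hT, lt_of_not_ge hd])
        exact mul_nonpos_of_nonpos_of_nonneg this (Complex.normSq_nonneg _)
    linarith [hquad ▸ hpos]
  calc S.card = Fintype.card ↥S := (Fintype.card_coe S).symm
    _ ≤ Module.finrank ℂ (↥T → ℂ) := hli.fintype_card_le_finrank
    _ = Fintype.card ↥T := Module.finrank_fintype_fun_eq_card ℂ
    _ = T.card := Fintype.card_coe T

private theorem inertia_aux {n : ℕ} (M P : Matrix (Fin n) (Fin n) ℂ)
    (hM : M.IsHermitian) (hX : (P * M * Pᴴ).IsHermitian) :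
    ((Finset.univ.filter fun i => 0 < hX.eigenvalues i).card ≤
      (Finset.univ.filter fun i => 0 < hM.eigenvalues i).card) ∧
    ((Finset.univ.filter fun i => hX.eigenvalues i < 0).card ≤
      (Finset.univ.filter fun i => hM.eigenvalues i < 0).card) := by
  have hMspec := hM.spectral_theorem
  rw [Unitary.conjStarAlgAut_apply] at hMspec
  have hXdiag := hX.conjStarAlgAut_star_eigenvectorUnitary
  rw [Unitary.conjStarAlgAut_apply, Unitary.coe_star, star_star] at hXdiag
  rw [Matrix.star_eq_conjTranspose] at hMspec hXdiag
  rw [show (RCLike.ofReal : ℝ → ℂ) = Complex.ofReal from rfl] at hMspec hXdiag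
  set U : Matrix (Fin n) (Fin n) ℂ := ↑(IsHermitian.eigenvectorUnitary hX) with hU
  set V : Matrix (Fin n) (Fin n) ℂ := ↑(IsHermitian.eigenvectorUnitary hM) with hV
  have key : diagonal ((↑) ∘ hX.eigenvalues : Fin n → ℂ)
      = (Vᴴ * Pᴴ * U)ᴴ * diagonal ((↑) ∘ hM.eigenvalues : Fin n → ℂ) * (Vᴴ * Pᴴ * U) := by
    calc diagonal ((↑) ∘ hX.eigenvalues : Fin n → ℂ)
        = Uᴴ * (P * M * Pᴴ) * U := hXdiag.symm
      _ = Uᴴ * (P * (V * diagonal ((↑) ∘ hM.eigenvalues) * Vᴴ) * Pᴴ) * U := by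
          rw [← hMspec]
      _ = (Vᴴ * Pᴴ * U)ᴴ * diagonal ((↑) ∘ hM.eigenvalues : Fin n → ℂ) * (Vᴴ * Pᴴ * U) := by
          simp only [conjTranspose_mul, conjTranspose_conjTranspose]
          noncomm_ring
  constructor
  · exact core _ _ _ key
  · have h1 : ∀ (f : Fin n → ℝ), diagonal ((↑) ∘ (-f) : Fin n → ℂ)
        = -diagonal ((↑) ∘ f : Fin n → ℂ) := fun f => by
      rw [diagonal_neg]; exact congrArg diagonal (funext fun i => by simp [Function.comp])
    have key' : diagonal ((↑) ∘ (-hX.eigenvalues) : Fin n → ℂ)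
        = (Vᴴ * Pᴴ * U)ᴴ * diagonal ((↑) ∘ (-hM.eigenvalues) : Fin n → ℂ) * (Vᴴ * Pᴴ * U) := by
      rw [h1, h1, Matrix.mul_neg, Matrix.neg_mul, key]
    have := core (-hM.eigenvalues) (-hX.eigenvalues) _ key'
    simpa [neg_pos] using this

theorem inertia_conj_le {n : ℕ} (M P : Matrix (Fin n) (Fin n) ℂ)
    (hM : M.IsHermitian) (hX : (P * M * Pᴴ).IsHermitian) :
    iPos hX ≤ iPos hM ∧ iNeg hX ≤ iNeg hM := by
  exact inertia_aux M P hM hX
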